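/- Let M be a positive integer and let f_0 = h_a h'_b − h_b h'_a and f_m = h_a u_m + h_b v_m (m = 1, …, M) be polynomials in the indeterminates h_a, h_b, h'_a, h'_b, u_1, v_1, …, u_M, v_M. Then at every real point at which h_a ≠ 0, the (M+1) × (4 + 2M) Jacobian matrix of (f_0, f_1, …, f_M) (rows are the gradients with respect to all 4 + 2M variables) has rank M+1, i.e., full row rank. -/

import Mathlib

open MvPolynomial

/-- Variables for the `μ = 1/2` decodability argument: `inl 0 = h_a`, `inl 1 = h_b`,
`inl 2 = h'_a`, `inl 3 = h'_b`, `inr (m, 0) = u_m`, `inr (m, 1) = v_m`. -/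
abbrev ZfVar (M : ℕ) : Type := Fin 4 ⊕ (Fin M × Fin 2)

/-- The family `f_0 = h_a h'_b − h_b h'_a`, `f_m = h_a u_m + h_b v_m` (`m = 1, …, M`). -/
noncomputable def zfFamily (M : ℕ) : Fin (M + 1) → MvPolynomial (ZfVar M) ℝ :=
  Fin.cases
    ((X (Sum.inl 0) : MvPolynomial (ZfVar M) ℝ) * X (Sum.inl 3) -
      X (Sum.inl 1) * X (Sum.inl 2))
    (fun m : Fin M =>
      (X (Sum.inl 0) : MvPolynomial (ZfVar M) ℝ) * X (Sum.inr (m, 0)) +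
        X (Sum.inl 1) * X (Sum.inr (m, 1)))

/-- Let `M ≥ 1`.  At every real point at which `h_a ≠ 0`, the `(M+1) × (4 + 2M)`
Jacobian matrix of `(f_0, f_1, …, f_M)` (rows are the gradients with respect to all
`4 + 2M` variables) has rank `M + 1`, i.e. full row rank. -/
theorem zeroforcing_jacobian_full_row_rank (M : ℕ) (hM : 0 < M)
    (x : ZfVar M → ℝ) (hx : x (Sum.inl 0) ≠ 0) :
    Matrix.rank (Matrix.of fun (m : Fin (M + 1)) (s : ZfVar M) =>
        eval x (pderiv s (zfFamily M m))) = M + 1 := by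
  set A : Matrix (Fin (M + 1)) (ZfVar M) ℝ :=
    Matrix.of fun (m : Fin (M + 1)) (s : ZfVar M) =>
      eval x (pderiv s (zfFamily M m)) with hA
  have hli : LinearIndependent ℝ A := by
    refine Fintype.linearIndependent_iff.mpr ?_
    intro g hg
    have hcol : ∀ s : ZfVar M, ∑ i, g i * A i s = 0 := by
      intro s
      have := congrFun hg s
      simpa [Finset.sum_apply] using this
    have h0 : g 0 = 0 := by
      have := hcol (Sum.inl 3)
      rw [Fin.sum_univ_succ] at this
      have hz : ∀ j : Fin M, A (Fin.succ j) (Sum.inl 3) = 0 := by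
        intro j
        simp [hA, zfFamily, pderiv_X, Pi.single_apply]
      have hd : A 0 (Sum.inl 3) = x (Sum.inl 0) := by
        simp [hA, zfFamily, pderiv_X, Pi.single_apply]
      simp [hz, hd] at this
      exact this.resolve_right hx
    intro i
    refine Fin.cases h0 (fun j => ?_) i
    have := hcol (Sum.inr (j, 0))
    rw [Fin.sum_univ_succ] at this
    have hz : ∀ j' : Fin M, A (Fin.succ j') (Sum.inr (j, 0)) =
        if j' = j then x (Sum.inl 0) else 0 := by
      intro j'
      simp only [hA, Matrix.of_apply, zfFamily, Fin.cases_succ]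
      split <;> simp_all [pderiv_X, Pi.single_apply]
    have hd : A 0 (Sum.inr (j, 0)) = 0 := by
      simp [hA, zfFamily, pderiv_X, Pi.single_apply]
    rw [hd] at this
    simp only [hz, mul_ite, mul_zero, Finset.sum_ite_eq', Finset.mem_univ, if_true,
      mul_zero, zero_add] at this
    exact (mul_eq_zero.mp this).resolve_right hx
  have := hli.rank_matrix
  simpa using this
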